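/- arXiv:2310.05309 — 2 statements merged into one kernel-verified Lean document; each statement's English description precedes it below -/
import Mathlib

section
/- For every w ∈ ℝ^d, the gradient of the regularized loss satisfies the bound ‖∇L_λ(w)‖₂ ≤ 2D² ‖c + λw‖₂. -/
open Finset
open scoped InnerProductSpace BigOperators

noncomputable section

/-- The Gibbs distribution on a finite set `X ⊆ ℝ^d` with parameter `w`:
`φ(x; w) = exp(w·x) / ∑_{y ∈ X} exp(w·y)`. -/
def gibbs {d : ℕ} (X : Finset (EuclideanSpace ℝ (Fin d)))
    (w x : EuclideanSpace ℝ (Fin d)) : ℝ :=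
  Real.exp ⟪w, x⟫_ℝ / ∑ y ∈ X, Real.exp ⟪w, y⟫_ℝ

/-- Expectation of a real function under the Gibbs distribution. -/
def gibbsExp {d : ℕ} (X : Finset (EuclideanSpace ℝ (Fin d)))
    (w : EuclideanSpace ℝ (Fin d)) (f : EuclideanSpace ℝ (Fin d) → ℝ) : ℝ :=
  ∑ x ∈ X, gibbs X w x * f x

/-- Variance of a real function under the Gibbs distribution. -/
def gibbsVar {d : ℕ} (X : Finset (EuclideanSpace ℝ (Fin d)))
    (w : EuclideanSpace ℝ (Fin d)) (f : EuclideanSpace ℝ (Fin d) → ℝ) : ℝ :=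
  gibbsExp X w (fun x => f x ^ 2) - (gibbsExp X w f) ^ 2

/-- Mean (a vector) of the Gibbs distribution. -/
def gibbsMean {d : ℕ} (X : Finset (EuclideanSpace ℝ (Fin d)))
    (w : EuclideanSpace ℝ (Fin d)) : EuclideanSpace ℝ (Fin d) :=
  ∑ x ∈ X, gibbs X w x • x

/-- The negative entropy `H(w) = E_{x ∼ φ(·;w)}[log φ(x;w)]`. -/
def negEnt {d : ℕ} (X : Finset (EuclideanSpace ℝ (Fin d)))
    (w : EuclideanSpace ℝ (Fin d)) : ℝ :=
  ∑ x ∈ X, gibbs X w x * Real.log (gibbs X w x)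


/-- The fast/slow mixture generator `p(x;w) = (1−β)φ(x;w) + βφ(x;ρw)`. -/
def pmix {d : ℕ} (X : Finset (EuclideanSpace ℝ (Fin d))) (β ρ : ℝ)
    (w x : EuclideanSpace ℝ (Fin d)) : ℝ :=
  (1 - β) * gibbs X w x + β * gibbs X (ρ • w) x

/-- The regularizer `R(w) = (1−β)H(w) + (β/ρ)H(ρw)`. -/
def reg {d : ℕ} (X : Finset (EuclideanSpace ℝ (Fin d))) (β ρ : ℝ)
    (w : EuclideanSpace ℝ (Fin d)) : ℝ :=
  (1 - β) * negEnt X w + (β / ρ) * negEnt X (ρ • w)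

/-- The regularized loss `L_λ(w) = E_{x∼p(·;w)}[c·x] + λ R(w)`. -/
def rloss {d : ℕ} (X : Finset (EuclideanSpace ℝ (Fin d))) (β ρ lam : ℝ)
    (c w : EuclideanSpace ℝ (Fin d)) : ℝ :=
  (∑ x ∈ X, pmix X β ρ w x * ⟪c, x⟫_ℝ) + lam * reg X β ρ w

set_option linter.unusedSectionVars false
section GradAux
variable {E : Type*} [NormedAddCommGroup E] [InnerProductSpace ℝ E] [CompleteSpace E]
variable {f g : E → ℝ} {gf gg : E} {u : E}

lemma toDual_eq_innerSL_aux (a : E) :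
    (InnerProductSpace.toDual ℝ E a : E →L[ℝ] ℝ) = innerSL ℝ a := by
  ext y; simp [InnerProductSpace.toDual_apply_apply]

lemma hasGradientAt_inner_aux (a : E) (u : E) :
    HasGradientAt (fun v => ⟪v, a⟫_ℝ) a u := by
  rw [hasGradientAt_iff_hasFDerivAt, toDual_eq_innerSL_aux]
  have h : (fun v : E => ⟪v, a⟫_ℝ) = fun v => (innerSL ℝ a) v := by
    funext v; simp [real_inner_comm]
  rw [h]
  exact (innerSL ℝ a).hasFDerivAt

lemma HasGradientAt.addAux (hf : HasGradientAt f gf u) (hg : HasGradientAt g gg u) :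
    HasGradientAt (fun v => f v + g v) (gf + gg) u := by
  rw [hasGradientAt_iff_hasFDerivAt] at *
  rw [map_add]; exact hf.add hg

lemma HasGradientAt.subAux (hf : HasGradientAt f gf u) (hg : HasGradientAt g gg u) :
    HasGradientAt (fun v => f v - g v) (gf - gg) u := by
  rw [hasGradientAt_iff_hasFDerivAt] at *
  rw [map_sub]; exact hf.sub hg

lemma hasGradientAt_sum_aux {ι : Type*} (s : Finset ι) (f : ι → E → ℝ) (g : ι → E)
    (h : ∀ i ∈ s, HasGradientAt (f i) (g i) u) :
    HasGradientAt (fun v => ∑ i ∈ s, f i v) (∑ i ∈ s, g i) u := by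
  rw [hasGradientAt_iff_hasFDerivAt, map_sum]
  exact HasFDerivAt.fun_sum fun i hi => (h i hi).hasFDerivAt

lemma HasGradientAt.constMulAux (r : ℝ) (hf : HasGradientAt f gf u) :
    HasGradientAt (fun v => r * f v) (r • gf) u := by
  rw [hasGradientAt_iff_hasFDerivAt] at *
  rw [map_smul]; exact hf.const_mul r

lemma HasGradientAt.mulAux (hf : HasGradientAt f gf u) (hg : HasGradientAt g gg u) :
    HasGradientAt (fun v => f v * g v) (f u • gg + g u • gf) u := by
  rw [hasGradientAt_iff_hasFDerivAt] at *
  rw [map_add, map_smul, map_smul]; exact hf.mul hg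

lemma HasGradientAt.mulConstAux (hf : HasGradientAt f gf u) (r : ℝ) :
    HasGradientAt (fun v => f v * r) (r • gf) u := by
  have h := hf.mulAux (hasGradientAt_const (x := u) (c := r))
  simpa using h

lemma comp_hasGradientAt_aux {h : ℝ → ℝ} {h' : ℝ}
    (hh : HasDerivAt h h' (f u)) (hf : HasGradientAt f gf u) :
    HasGradientAt (fun v => h (f v)) (h' • gf) u := by
  rw [hasGradientAt_iff_hasFDerivAt] at *
  rw [map_smul]; exact hh.comp_hasFDerivAt u hf

lemma HasGradientAt.expAux (hf : HasGradientAt f gf u) :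
    HasGradientAt (fun v => Real.exp (f v)) (Real.exp (f u) • gf) u :=
  comp_hasGradientAt_aux (Real.hasDerivAt_exp (f u)) hf

lemma HasGradientAt.logAux (hf : HasGradientAt f gf u) (h0 : f u ≠ 0) :
    HasGradientAt (fun v => Real.log (f v)) ((f u)⁻¹ • gf) u :=
  comp_hasGradientAt_aux (Real.hasDerivAt_log h0) hf

lemma HasGradientAt.invAux (hf : HasGradientAt f gf u) (h0 : f u ≠ 0) :
    HasGradientAt (fun v => (f v)⁻¹) ((-((f u) ^ 2)⁻¹) • gf) u :=
  comp_hasGradientAt_aux (hasDerivAt_inv h0) hf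

lemma HasGradientAt.compSmulAux (ρ : ℝ) {w : E} (hf : HasGradientAt f gf (ρ • w)) :
    HasGradientAt (fun v => f (ρ • v)) (ρ • gf) w := by
  rw [hasGradientAt_iff_hasFDerivAt] at *
  have h1 : HasFDerivAt (fun v : E => ρ • v) (ρ • ContinuousLinearMap.id ℝ E) w := by
    have := (ρ • ContinuousLinearMap.id ℝ E).hasFDerivAt (x := w)
    convert this using 1
    funext v; simp
  have h2 := hf.comp w h1
  refine h2.congr_fderiv ?_
  ext y
  simp [InnerProductSpace.toDual_apply_apply, real_inner_smul_left, inner_smul_right]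

/-- partition function -/
def Zf (X : Finset E) (u : E) : ℝ := ∑ x ∈ X, Real.exp ⟪u, x⟫_ℝ

/-- unnormalized expectation of `⟪v,·⟫` under Gibbs weights -/
def Sf (X : Finset E) (v u : E) : ℝ := ∑ x ∈ X, Real.exp ⟪u, x⟫_ℝ * ⟪v, x⟫_ℝ

/-- covariance-type vector: the gradient of `u ↦ Sf X v u / Zf X u` -/
def GM (X : Finset E) (v u : E) : E :=
  ∑ x ∈ X, (Real.exp ⟪u, x⟫_ℝ / Zf X u) • ((⟪v, x⟫_ℝ - Sf X v u / Zf X u) • x)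

variable {X : Finset E}

lemma Zf_pos (hX : X.Nonempty) (u : E) : 0 < Zf X u :=
  Finset.sum_pos (fun _ _ => Real.exp_pos _) hX

lemma hasGradientAt_Zf (u : E) :
    HasGradientAt (Zf X) (∑ x ∈ X, Real.exp ⟪u, x⟫_ℝ • x) u :=
  hasGradientAt_sum_aux X _ _ fun x _ => (hasGradientAt_inner_aux x u).expAux

lemma hasGradientAt_Sf (v u : E) :
    HasGradientAt (fun u => Sf X v u)
      (∑ x ∈ X, (Real.exp ⟪u, x⟫_ℝ * ⟪v, x⟫_ℝ) • x) u := by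
  refine hasGradientAt_sum_aux X _ _ fun x _ => ?_
  have h := ((hasGradientAt_inner_aux x u).expAux).mulConstAux ⟪v, x⟫_ℝ
  simpa [smul_smul, mul_comm] using h

lemma hasGradientAt_Tf (u : E) :
    HasGradientAt (fun u => Sf X u u)
      (∑ x ∈ X, ((Real.exp ⟪u, x⟫_ℝ * ⟪u, x⟫_ℝ) • x + Real.exp ⟪u, x⟫_ℝ • x)) u := by
  refine hasGradientAt_sum_aux X _ _ fun x _ => ?_
  have h := ((hasGradientAt_inner_aux x u).expAux).mulAux (hasGradientAt_inner_aux x u)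
  have e : Real.exp ⟪u, x⟫_ℝ • x + ⟪u, x⟫_ℝ • Real.exp ⟪u, x⟫_ℝ • x
      = (Real.exp ⟪u, x⟫_ℝ * ⟪u, x⟫_ℝ) • x + Real.exp ⟪u, x⟫_ℝ • x := by
    rw [smul_smul, add_comm]; ring_nf
  rw [e] at h
  exact h

lemma hasGradientAt_M (hX : X.Nonempty) (v u : E) :
    HasGradientAt (fun u => Sf X v u / Zf X u) (GM X v u) u := by
  have hZ : Zf X u ≠ 0 := (Zf_pos hX u).ne'
  have h := (hasGradientAt_Sf (X := X) v u).mulAux ((hasGradientAt_Zf (X := X) u).invAux hZ)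
  have hfun : (fun u => Sf X v u * (Zf X u)⁻¹) = fun u => Sf X v u / Zf X u := by
    funext u; rw [div_eq_mul_inv]
  rw [hfun] at h
  have hgr : GM X v u
      = Sf X v u • ((-(Zf X u ^ 2)⁻¹) • ∑ x ∈ X, Real.exp ⟪u, x⟫_ℝ • x)
        + (Zf X u)⁻¹ • ∑ x ∈ X, (Real.exp ⟪u, x⟫_ℝ * ⟪v, x⟫_ℝ) • x := by
    rw [GM]
    simp only [Finset.smul_sum, smul_add, smul_smul, ← Finset.sum_add_distrib]
    refine Finset.sum_congr rfl fun x hx => ?_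
    rw [← add_smul]
    congr 1
    field_simp
    ring
  rw [hgr]
  exact h

lemma hasGradientAt_N (hX : X.Nonempty) (u : E) :
    HasGradientAt (fun u => Sf X u u / Zf X u - Real.log (Zf X u)) (GM X u u) u := by
  have hZ : Zf X u ≠ 0 := (Zf_pos hX u).ne'
  have h1 := (hasGradientAt_Tf (X := X) u).mulAux ((hasGradientAt_Zf (X := X) u).invAux hZ)
  have h2 := (hasGradientAt_Zf (X := X) u).logAux hZ
  have h := h1.subAux h2
  have hfun : (fun u => Sf X u u * (Zf X u)⁻¹ - Real.log (Zf X u))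
      = fun u => Sf X u u / Zf X u - Real.log (Zf X u) := by
    funext u; rw [div_eq_mul_inv]
  rw [hfun] at h
  have hgr : GM X u u
      = (Sf X u u • ((-(Zf X u ^ 2)⁻¹) • ∑ x ∈ X, Real.exp ⟪u, x⟫_ℝ • x)
          + (Zf X u)⁻¹ • ∑ x ∈ X,
              ((Real.exp ⟪u, x⟫_ℝ * ⟪u, x⟫_ℝ) • x + Real.exp ⟪u, x⟫_ℝ • x))
        - (Zf X u)⁻¹ • ∑ x ∈ X, Real.exp ⟪u, x⟫_ℝ • x := by
    rw [GM]
    simp only [Finset.smul_sum, smul_add, smul_smul, ← Finset.sum_add_distrib,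
      ← Finset.sum_sub_distrib]
    refine Finset.sum_congr rfl fun x hx => ?_
    rw [← add_smul, ← add_smul, ← sub_smul]
    congr 1
    field_simp
    ring
  rw [hgr]
  exact h

lemma Sf_add_smul (c w u : E) (lam : ℝ) :
    Sf X (c + lam • w) u = Sf X c u + lam * Sf X w u := by
  simp only [Sf, inner_add_left, real_inner_smul_left, mul_add, Finset.sum_add_distrib,
    Finset.mul_sum]
  congr 1
  exact Finset.sum_congr rfl fun x hx => by ring

lemma Sf_smul (r : ℝ) (v u : E) : Sf X (r • v) u = r * Sf X v u := by
  simp only [Sf, real_inner_smul_left, Finset.mul_sum]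
  exact Finset.sum_congr rfl fun x hx => by ring

lemma GM_add_smul (c w u : E) (lam : ℝ) :
    GM X (c + lam • w) u = GM X c u + lam • GM X w u := by
  simp only [GM, Sf_add_smul, inner_add_left, real_inner_smul_left, Finset.smul_sum,
    smul_smul, ← Finset.sum_add_distrib]
  refine Finset.sum_congr rfl fun x hx => ?_
  rw [← add_smul]
  congr 1
  field_simp
  ring

lemma GM_smul (r : ℝ) (v u : E) : GM X (r • v) u = r • GM X v u := by
  simp only [GM, Sf_smul, real_inner_smul_left, Finset.smul_sum, smul_smul]
  refine Finset.sum_congr rfl fun x hx => ?_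
  congr 1
  field_simp

lemma GM_norm_le (hX : X.Nonempty) {D : ℝ} (hD : ∀ x ∈ X, ‖x‖ ≤ D) (v u : E) :
    ‖GM X v u‖ ≤ 2 * D ^ 2 * ‖v‖ := by
  have hZ := Zf_pos hX u
  obtain ⟨x₀, hx₀⟩ := hX
  have hD0 : 0 ≤ D := le_trans (norm_nonneg x₀) (hD x₀ hx₀)
  have hip : ∀ x ∈ X, |⟪v, x⟫_ℝ| ≤ D * ‖v‖ := fun x hx => by
    calc |⟪v, x⟫_ℝ| ≤ ‖v‖ * ‖x‖ := abs_real_inner_le_norm v x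
    _ ≤ ‖v‖ * D := mul_le_mul_of_nonneg_left (hD x hx) (norm_nonneg v)
    _ = D * ‖v‖ := mul_comm _ _
  have hm : |Sf X v u / Zf X u| ≤ D * ‖v‖ := by
    rw [abs_div, abs_of_pos hZ, div_le_iff₀ hZ]
    calc |Sf X v u| ≤ ∑ x ∈ X, |Real.exp ⟪u, x⟫_ℝ * ⟪v, x⟫_ℝ| :=
          Finset.abs_sum_le_sum_abs _ _
    _ ≤ ∑ x ∈ X, Real.exp ⟪u, x⟫_ℝ * (D * ‖v‖) := by
        refine Finset.sum_le_sum fun x hx => ?_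
        rw [abs_mul, abs_of_pos (Real.exp_pos _)]
        exact mul_le_mul_of_nonneg_left (hip x hx) (Real.exp_pos _).le
    _ = D * ‖v‖ * Zf X u := by rw [← Finset.sum_mul, Zf]; ring
  have hsum1 : ∑ x ∈ X, Real.exp ⟪u, x⟫_ℝ / Zf X u = 1 := by
    rw [← Finset.sum_div, Zf, div_self]
    exact (Zf_pos ⟨x₀, hx₀⟩ u).ne'
  calc ‖GM X v u‖
      ≤ ∑ x ∈ X, ‖(Real.exp ⟪u, x⟫_ℝ / Zf X u) • ((⟪v, x⟫_ℝ - Sf X v u / Zf X u) • x)‖ :=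
        norm_sum_le _ _
    _ ≤ ∑ x ∈ X, (Real.exp ⟪u, x⟫_ℝ / Zf X u) * (2 * D ^ 2 * ‖v‖) := by
        refine Finset.sum_le_sum fun x hx => ?_
        rw [norm_smul, norm_smul, Real.norm_eq_abs, Real.norm_eq_abs,
          abs_of_pos (div_pos (Real.exp_pos _) hZ)]
        have h1 : |⟪v, x⟫_ℝ - Sf X v u / Zf X u| ≤ 2 * (D * ‖v‖) := by
          calc |⟪v, x⟫_ℝ - Sf X v u / Zf X u| ≤ |⟪v, x⟫_ℝ| + |Sf X v u / Zf X u| := by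
                rw [sub_eq_add_neg]
                exact (abs_add_le _ _).trans (by rw [abs_neg])
          _ ≤ 2 * (D * ‖v‖) := by linarith [hip x hx, hm]
        have h2 : |⟪v, x⟫_ℝ - Sf X v u / Zf X u| * ‖x‖ ≤ 2 * (D * ‖v‖) * D :=
          mul_le_mul h1 (hD x hx) (norm_nonneg x) (by positivity)
        calc (Real.exp ⟪u, x⟫_ℝ / Zf X u) * (|⟪v, x⟫_ℝ - Sf X v u / Zf X u| * ‖x‖)
            ≤ (Real.exp ⟪u, x⟫_ℝ / Zf X u) * (2 * (D * ‖v‖) * D) :=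
              mul_le_mul_of_nonneg_left h2 (div_pos (Real.exp_pos _) hZ).le
          _ = (Real.exp ⟪u, x⟫_ℝ / Zf X u) * (2 * D ^ 2 * ‖v‖) := by ring
    _ = 2 * D ^ 2 * ‖v‖ := by rw [← Finset.sum_mul, hsum1, one_mul]

end GradAux

section Bridge
variable {d : ℕ} {X : Finset (EuclideanSpace ℝ (Fin d))}

lemma gibbs_eq (u x : EuclideanSpace ℝ (Fin d)) :
    gibbs X u x = Real.exp ⟪u, x⟫_ℝ / Zf X u := rfl

lemma sum_gibbs_mul (u : EuclideanSpace ℝ (Fin d)) (f : EuclideanSpace ℝ (Fin d) → ℝ) :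
    ∑ x ∈ X, gibbs X u x * f x = (∑ x ∈ X, Real.exp ⟪u, x⟫_ℝ * f x) / Zf X u := by
  rw [Finset.sum_div]
  exact Finset.sum_congr rfl fun x hx => by rw [gibbs_eq, div_mul_eq_mul_div]

lemma sum_gibbs_one (hX : X.Nonempty) (u : EuclideanSpace ℝ (Fin d)) :
    ∑ x ∈ X, gibbs X u x = 1 := by
  have hZ := Zf_pos hX u
  simp only [gibbs_eq, ← Finset.sum_div]
  rw [show (∑ x ∈ X, Real.exp ⟪u, x⟫_ℝ) = Zf X u from rfl, div_self hZ.ne']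

lemma negEnt_eq (hX : X.Nonempty) (u : EuclideanSpace ℝ (Fin d)) :
    negEnt X u = Sf X u u / Zf X u - Real.log (Zf X u) := by
  have hZ := Zf_pos hX u
  have h1 : ∀ x ∈ X, gibbs X u x * Real.log (gibbs X u x)
      = gibbs X u x * ⟪u, x⟫_ℝ - gibbs X u x * Real.log (Zf X u) := fun x hx => by
    rw [gibbs_eq, Real.log_div (Real.exp_ne_zero _) hZ.ne', Real.log_exp, ← gibbs_eq, mul_sub]
  rw [negEnt, Finset.sum_congr rfl h1, Finset.sum_sub_distrib, ← Finset.sum_mul,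
    sum_gibbs_one hX u, one_mul, sum_gibbs_mul]
  rfl

lemma rloss_eq (hX : X.Nonempty) (β ρ lam : ℝ) (c w : EuclideanSpace ℝ (Fin d)) :
    rloss X β ρ lam c w
      = (1 - β) * (Sf X c w / Zf X w) + β * (Sf X c (ρ • w) / Zf X (ρ • w))
        + lam * ((1 - β) * (Sf X w w / Zf X w - Real.log (Zf X w))
          + (β / ρ) * (Sf X (ρ • w) (ρ • w) / Zf X (ρ • w) - Real.log (Zf X (ρ • w)))) := by
  rw [rloss, reg, negEnt_eq hX, negEnt_eq hX]
  congr 1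
  have : ∀ x ∈ X, pmix X β ρ w x * ⟪c, x⟫_ℝ
      = (1 - β) * (gibbs X w x * ⟪c, x⟫_ℝ) + β * (gibbs X (ρ • w) x * ⟪c, x⟫_ℝ) := fun x hx => by
    rw [pmix]; ring
  rw [Finset.sum_congr rfl this, Finset.sum_add_distrib, ← Finset.mul_sum, ← Finset.mul_sum,
    sum_gibbs_mul, sum_gibbs_mul]
  rfl

end Bridge

/-- For every `w`, the gradient of the regularized loss satisfies
`‖∇L_λ(w)‖₂ ≤ 2D²‖c + λw‖₂`. -/
theorem gradient_rloss_norm_bound {d : ℕ} (hd : 1 ≤ d)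
    (X : Finset (EuclideanSpace ℝ (Fin d))) (hX : X.Nonempty)
    (D : ℝ) (hD : ∀ x ∈ X, ‖x‖ ≤ D)
    (β ρ : ℝ) (hβ : β ∈ Set.Ioo (0 : ℝ) 1) (hρ : ρ ∈ Set.Ioo (0 : ℝ) 1)
    (c : EuclideanSpace ℝ (Fin d)) (lam : ℝ) (hlam : 0 < lam) :
    ∀ w : EuclideanSpace ℝ (Fin d),
      ‖gradient (rloss X β ρ lam c) w‖ ≤ 2 * D ^ 2 * ‖c + lam • w‖ := by
  intro w
  have hρ0 : ρ ≠ 0 := ne_of_gt hρ.1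
  obtain ⟨x₀, hx₀⟩ := hX
  have hD0 : 0 ≤ D := le_trans (norm_nonneg x₀) (hD x₀ hx₀)
  have hXne : X.Nonempty := ⟨x₀, hx₀⟩
  -- the gradient candidate
  set G : EuclideanSpace ℝ (Fin d) :=
    ((1 - β) • GM X c w + β • (ρ • GM X c (ρ • w)))
      + lam • ((1 - β) • GM X w w + (β / ρ) • (ρ • GM X (ρ • w) (ρ • w))) with hGdef
  have h1 := (hasGradientAt_M hXne c w).constMulAux (1 - β)
  have h2 := ((hasGradientAt_M hXne c (ρ • w)).compSmulAux ρ).constMulAux β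
  have h3 := (hasGradientAt_N hXne w).constMulAux (1 - β)
  have h4 := ((hasGradientAt_N hXne (ρ • w)).compSmulAux ρ).constMulAux (β / ρ)
  have hg := (h1.addAux h2).addAux ((h3.addAux h4).constMulAux lam)
  have hfun : rloss X β ρ lam c = fun w =>
      (1 - β) * (Sf X c w / Zf X w) + β * (Sf X c (ρ • w) / Zf X (ρ • w))
        + lam * ((1 - β) * (Sf X w w / Zf X w - Real.log (Zf X w))
          + (β / ρ) * (Sf X (ρ • w) (ρ • w) / Zf X (ρ • w) - Real.log (Zf X (ρ • w)))) :=
    funext fun w => rloss_eq hXne β ρ lam c w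
  have hG : HasGradientAt (rloss X β ρ lam c) G w := by
    rw [hfun]
    exact hg
  rw [hG.gradient]
  -- rewrite G compactly
  have hGrw : G = (1 - β) • GM X (c + lam • w) w + (β * ρ) • GM X (c + lam • w) (ρ • w) := by
    rw [hGdef, GM_add_smul, GM_add_smul, GM_smul]
    match_scalars <;> field_simp <;> ring
  have hb1 := GM_norm_le hXne hD (c + lam • w) w
  have hb2 := GM_norm_le hXne hD (c + lam • w) (ρ • w)
  have hβ1 : (0 : ℝ) < 1 - β := by linarith [hβ.2]
  have hβρ : (0 : ℝ) < β * ρ := mul_pos hβ.1 hρ.1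
  have hKnn : 0 ≤ 2 * D ^ 2 * ‖c + lam • w‖ := by positivity
  calc ‖G‖ ≤ (1 - β) * ‖GM X (c + lam • w) w‖ + (β * ρ) * ‖GM X (c + lam • w) (ρ • w)‖ := by
        rw [hGrw]
        refine (norm_add_le _ _).trans ?_
        rw [norm_smul, norm_smul, Real.norm_eq_abs, Real.norm_eq_abs,
          abs_of_pos hβ1, abs_of_pos hβρ]
    _ ≤ (1 - β) * (2 * D ^ 2 * ‖c + lam • w‖) + (β * ρ) * (2 * D ^ 2 * ‖c + lam • w‖) :=
        add_le_add (mul_le_mul_of_nonneg_left hb1 hβ1.le)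
          (mul_le_mul_of_nonneg_left hb2 hβρ.le)
    _ ≤ 2 * D ^ 2 * ‖c + lam • w‖ := by nlinarith [hβ.1, hρ.2, hKnn, mul_pos hβ.1 (sub_pos.mpr hρ.2)]

end
end

section
/- Let w ∈ ℝ^d with ‖w‖₂ ≤ B for some B > 0, and suppose Var_{x∼U(X)}[(c+λw)·x] ≥ α‖c+λw‖₂² for some α > 0. If 0 < ρ ≤ min{1/(2BD), α/(12BD³)}, then the regularized loss satisfies the correlation lower bound ∇L_λ(w)·(c + λw) ≥ (βρα/2)·‖c + λw‖₂². -/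
open Finset
open scoped InnerProductSpace BigOperators

noncomputable section

/-- Mean (a vector) of the uniform distribution on `X`. -/
def unifMean {d : ℕ} (X : Finset (EuclideanSpace ℝ (Fin d))) : EuclideanSpace ℝ (Fin d) :=
  (X.card : ℝ)⁻¹ • ∑ x ∈ X, x

/-- Expectation of a real function under the uniform distribution on `X`. -/
def unifExp {d : ℕ} (X : Finset (EuclideanSpace ℝ (Fin d)))
    (f : EuclideanSpace ℝ (Fin d) → ℝ) : ℝ :=
  (X.card : ℝ)⁻¹ * ∑ x ∈ X, f x

/-- Variance of a real function under the uniform distribution on `X`. -/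
def unifVar {d : ℕ} (X : Finset (EuclideanSpace ℝ (Fin d)))
    (f : EuclideanSpace ℝ (Fin d) → ℝ) : ℝ :=
  unifExp X (fun x => f x ^ 2) - (unifExp X f) ^ 2


section Aux

variable {d : ℕ}
local notation "E" => EuclideanSpace ℝ (Fin d)

private lemma Zpos (X : Finset E) (hX : X.Nonempty) (u : E) :
    0 < ∑ y ∈ X, Real.exp ⟪u, y⟫_ℝ :=
  Finset.sum_pos (fun _ _ => Real.exp_pos _) hX

private lemma gibbs_pos (X : Finset E) (hX : X.Nonempty) (u x : E) : 0 < gibbs X u x :=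
  div_pos (Real.exp_pos _) (Zpos X hX u)

private lemma gibbs_sum (X : Finset E) (hX : X.Nonempty) (u : E) :
    ∑ x ∈ X, gibbs X u x = 1 := by
  unfold gibbs; rw [← Finset.sum_div]; exact div_self (Zpos X hX u).ne'

private lemma gibbsExp_eq (X : Finset E) (u : E) (f : E → ℝ) :
    gibbsExp X u f = (∑ x ∈ X, Real.exp ⟪u,x⟫_ℝ * f x) / (∑ y ∈ X, Real.exp ⟪u,y⟫_ℝ) := by
  unfold gibbsExp gibbs
  rw [Finset.sum_div]
  exact Finset.sum_congr rfl fun x _ => (div_mul_eq_mul_div _ _ _)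

private lemma gibbsExp_eq_smul (X : Finset E) (u : E) (s : ℝ) (f h : E → ℝ)
    (hfh : ∀ x ∈ X, f x = s * h x) : gibbsExp X u f = s * gibbsExp X u h := by
  unfold gibbsExp
  rw [Finset.mul_sum]
  exact Finset.sum_congr rfl fun x hx => by rw [hfh x hx]; ring

private lemma gibbsExp_eq_add (X : Finset E) (u : E) (s : ℝ) (f h k : E → ℝ)
    (hfh : ∀ x ∈ X, f x = h x + s * k x) :
    gibbsExp X u f = gibbsExp X u h + s * gibbsExp X u k := by
  unfold gibbsExp
  rw [Finset.mul_sum, ← Finset.sum_add_distrib]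
  exact Finset.sum_congr rfl fun x hx => by rw [hfh x hx]; ring

private lemma hasDerivAt_expInner (u v x : E) :
    HasDerivAt (fun t : ℝ => Real.exp ⟪u + t • v, x⟫_ℝ) (Real.exp ⟪u,x⟫_ℝ * ⟪v,x⟫_ℝ) 0 := by
  have h1 : HasDerivAt (fun t : ℝ => ⟪u + t • v, x⟫_ℝ) ⟪v,x⟫_ℝ 0 := by
    simp only [inner_add_left, real_inner_smul_left]
    simpa using ((hasDerivAt_id (0:ℝ)).mul_const ⟪v,x⟫_ℝ).const_add ⟪u,x⟫_ℝ
  simpa using h1.exp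

private lemma hasDerivAt_gibbs_line (X : Finset E) (hX : X.Nonempty) (u v x : E) :
    HasDerivAt (fun t : ℝ => gibbs X (u + t • v) x)
      (gibbs X u x * (⟪v,x⟫_ℝ - gibbsExp X u (fun y => ⟪v,y⟫_ℝ))) 0 := by
  have hZ : HasDerivAt (fun t : ℝ => ∑ y ∈ X, Real.exp ⟪u + t • v, y⟫_ℝ)
      (∑ y ∈ X, Real.exp ⟪u,y⟫_ℝ * ⟪v,y⟫_ℝ) 0 :=
    HasDerivAt.fun_sum fun y _ => hasDerivAt_expInner u v y
  have hZne : (fun t : ℝ => ∑ y ∈ X, Real.exp ⟪u + t • v, y⟫_ℝ) 0 ≠ 0 := by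
    simpa using (Zpos X hX u).ne'
  have hdiv := (hasDerivAt_expInner u v x).fun_div hZ hZne
  simp only [zero_smul, add_zero] at hdiv
  have hZ0 : (0:ℝ) < ∑ y ∈ X, Real.exp ⟪u, y⟫_ℝ := Zpos X hX u
  refine hdiv.congr_deriv ?_
  rw [gibbsExp_eq]
  unfold gibbs
  field_simp

private lemma sum_qprime_mul (X : Finset E) (u v : E) (f : E → ℝ) :
    ∑ x ∈ X, gibbs X u x * (⟪v,x⟫_ℝ - gibbsExp X u (fun y => ⟪v,y⟫_ℝ)) * f x
      = gibbsExp X u (fun x => ⟪v,x⟫_ℝ * f x)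
        - gibbsExp X u (fun y => ⟪v,y⟫_ℝ) * gibbsExp X u f := by
  have h1 : ∀ x ∈ X, gibbs X u x * (⟪v,x⟫_ℝ - gibbsExp X u (fun y => ⟪v,y⟫_ℝ)) * f x
      = gibbs X u x * (⟪v,x⟫_ℝ * f x)
        - gibbsExp X u (fun y => ⟪v,y⟫_ℝ) * (gibbs X u x * f x) := fun x _ => by ring
  rw [Finset.sum_congr rfl h1, Finset.sum_sub_distrib, ← Finset.mul_sum]
  rfl

private lemma hasDerivAt_gibbsExp_line (X : Finset E) (hX : X.Nonempty) (u v : E) (f : E → ℝ) :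
    HasDerivAt (fun t : ℝ => ∑ x ∈ X, gibbs X (u + t • v) x * f x)
      (gibbsExp X u (fun x => ⟪v,x⟫_ℝ * f x)
        - gibbsExp X u (fun y => ⟪v,y⟫_ℝ) * gibbsExp X u f) 0 := by
  have h := HasDerivAt.fun_sum (fun x (_ : x ∈ X) =>
    (hasDerivAt_gibbs_line X hX u v x).mul_const (f x))
  rwa [sum_qprime_mul X u v f] at h

private lemma hasDerivAt_negEnt_line (X : Finset E) (hX : X.Nonempty) (u v : E) :
    HasDerivAt (fun t : ℝ => negEnt X (u + t • v))
      (gibbsExp X u (fun x => ⟪v,x⟫_ℝ * ⟪u,x⟫_ℝ)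
        - gibbsExp X u (fun y => ⟪v,y⟫_ℝ) * gibbsExp X u (fun y => ⟪u,y⟫_ℝ)) 0 := by
  have hterm : ∀ x ∈ X, HasDerivAt
      (fun t : ℝ => gibbs X (u + t • v) x * Real.log (gibbs X (u + t • v) x))
      (gibbs X u x * (⟪v,x⟫_ℝ - gibbsExp X u (fun y => ⟪v,y⟫_ℝ))
        * (Real.log (gibbs X u x) + 1)) 0 := by
    intro x _
    have hq := hasDerivAt_gibbs_line X hX u v x
    have hq0 : (fun t : ℝ => gibbs X (u + t • v) x) 0 ≠ 0 := by
      simpa using (gibbs_pos X hX u x).ne'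
    have hlog := hq.log hq0
    have hmul := hq.fun_mul hlog
    simp only [zero_smul, add_zero] at hmul
    refine hmul.congr_deriv ?_
    have h0 : gibbs X u x ≠ 0 := (gibbs_pos X hX u x).ne'
    field_simp
  have hsum := HasDerivAt.fun_sum hterm
  have hC : ∀ x ∈ X, Real.log (gibbs X u x) + 1
      = ⟪u,x⟫_ℝ + (1 - Real.log (∑ y ∈ X, Real.exp ⟪u, y⟫_ℝ)) := by
    intro x _
    unfold gibbs
    rw [Real.log_div (Real.exp_pos _).ne' (Zpos X hX u).ne', Real.log_exp]
    ring
  have hval : ∑ x ∈ X, gibbs X u x * (⟪v,x⟫_ℝ - gibbsExp X u (fun y => ⟪v,y⟫_ℝ))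
        * (Real.log (gibbs X u x) + 1)
      = gibbsExp X u (fun x => ⟪v,x⟫_ℝ * ⟪u,x⟫_ℝ)
        - gibbsExp X u (fun y => ⟪v,y⟫_ℝ) * gibbsExp X u (fun y => ⟪u,y⟫_ℝ) := by
    set C := 1 - Real.log (∑ y ∈ X, Real.exp ⟪u, y⟫_ℝ) with hCdef
    rw [Finset.sum_congr rfl (fun x hx => by rw [hC x hx])]
    rw [sum_qprime_mul X u v (fun x => ⟪u,x⟫_ℝ + C)]
    have e1 : gibbsExp X u (fun x => ⟪v,x⟫_ℝ * (⟪u,x⟫_ℝ + C))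
        = gibbsExp X u (fun x => ⟪v,x⟫_ℝ * ⟪u,x⟫_ℝ) + C * gibbsExp X u (fun y => ⟪v,y⟫_ℝ) :=
      gibbsExp_eq_add X u C _ _ _ (fun x _ => by ring)
    have e2 : gibbsExp X u (fun x => ⟪u,x⟫_ℝ + C)
        = gibbsExp X u (fun y => ⟪u,y⟫_ℝ) + C * gibbsExp X u (fun _ => (1:ℝ)) :=
      gibbsExp_eq_add X u C _ _ _ (fun x _ => by ring)
    have e3 : gibbsExp X u (fun _ => (1:ℝ)) = 1 := by
      unfold gibbsExp
      simp only [mul_one]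
      exact gibbs_sum X hX u
    rw [e1, e2, e3]
    ring
  rw [hval] at hsum
  exact hsum

private lemma diff_inner (x : E) : Differentiable ℝ (fun u : E => ⟪u, x⟫_ℝ) :=
  differentiable_id.inner (𝕜 := ℝ) (differentiable_const x)

private lemma diff_gibbs (X : Finset E) (hX : X.Nonempty) (x : E) :
    Differentiable ℝ (fun u => gibbs X u x) := by
  have h1 : Differentiable ℝ (fun u : E => Real.exp ⟪u, x⟫_ℝ) :=
    Real.differentiable_exp.comp (diff_inner x)
  have h2 : Differentiable ℝ (fun u : E => ∑ y ∈ X, Real.exp ⟪u, y⟫_ℝ) :=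
    Differentiable.fun_sum fun y _ => Real.differentiable_exp.comp (diff_inner y)
  have h3 : Differentiable ℝ (fun u : E => (∑ y ∈ X, Real.exp ⟪u, y⟫_ℝ)⁻¹) :=
    h2.inv fun u => (Zpos X hX u).ne'
  have := h1.fun_mul h3
  simpa only [gibbs, div_eq_mul_inv] using this

private lemma diff_negEnt (X : Finset E) (hX : X.Nonempty) : Differentiable ℝ (negEnt X) := by
  unfold negEnt
  apply Differentiable.fun_sum
  intro x _
  exact (diff_gibbs X hX x).mul
    (Differentiable.log (diff_gibbs X hX x) fun u => (gibbs_pos X hX u x).ne')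

private lemma diff_smul (ρ : ℝ) : Differentiable ℝ (fun u : E => ρ • u) :=
  differentiable_id.const_smul ρ

private lemma diff_rloss (X : Finset E) (hX : X.Nonempty) (β ρ lam : ℝ) (c : E) :
    Differentiable ℝ (rloss X β ρ lam c) := by
  unfold rloss pmix reg
  apply Differentiable.add
  · apply Differentiable.fun_sum
    intro x _
    exact ((((diff_gibbs X hX x).const_mul (1-β)).add
      (((diff_gibbs X hX x).comp (diff_smul ρ)).const_mul β)).mul_const _)
  · exact (((diff_negEnt X hX).const_mul (1-β)).add
      (((diff_negEnt X hX).comp (diff_smul ρ)).const_mul (β/ρ))).const_mul lam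

private lemma expand_sq (X : Finset E) (p f : E → ℝ) (a : ℝ) (hp : ∑ x ∈ X, p x = 1) :
    ∑ x ∈ X, p x * (f x - a)^2
      = ((∑ x ∈ X, p x * f x ^ 2) - (∑ x ∈ X, p x * f x)^2)
        + ((∑ x ∈ X, p x * f x) - a)^2 := by
  have h1 : ∀ x ∈ X, p x * (f x - a)^2
      = p x * f x ^ 2 - (2*a) * (p x * f x) + a^2 * p x := fun x _ => by ring
  rw [Finset.sum_congr rfl h1, Finset.sum_add_distrib, Finset.sum_sub_distrib,
    ← Finset.mul_sum, ← Finset.mul_sum, hp]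
  ring

private lemma gibbsVar_eq (X : Finset E) (hX : X.Nonempty) (u : E) (f : E → ℝ) :
    gibbsVar X u f = ∑ x ∈ X, gibbs X u x * (f x - gibbsExp X u f)^2 := by
  have h := expand_sq X (gibbs X u) f (gibbsExp X u f) (gibbs_sum X hX u)
  rw [show ∑ x ∈ X, gibbs X u x * f x = gibbsExp X u f from rfl, sub_self] at h
  unfold gibbsVar
  rw [h, show ∑ x ∈ X, gibbs X u x * f x ^ 2 = gibbsExp X u (fun x => f x ^ 2) from rfl]
  ring

private lemma gibbsVar_nonneg (X : Finset E) (hX : X.Nonempty) (u : E) (f : E → ℝ) :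
    0 ≤ gibbsVar X u f := by
  rw [gibbsVar_eq X hX u f]
  exact Finset.sum_nonneg fun x _ => mul_nonneg (gibbs_pos X hX u x).le (sq_nonneg _)

private lemma unif_decomp (X : Finset E) (hX : X.Nonempty) (f : E → ℝ) (a : ℝ) :
    ∑ x ∈ X, (X.card:ℝ)⁻¹ * (f x - a)^2 = unifVar X f + (unifExp X f - a)^2 := by
  have hn : (0:ℝ) < (X.card : ℝ) := by exact_mod_cast Finset.card_pos.mpr hX
  have hp : ∑ _x ∈ X, ((X.card:ℝ)⁻¹) = 1 := by
    rw [Finset.sum_const, nsmul_eq_mul, mul_inv_cancel₀ hn.ne']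
  have h := expand_sq X (fun _ => (X.card:ℝ)⁻¹) f a hp
  unfold unifVar unifExp
  rw [Finset.mul_sum, Finset.mul_sum]
  exact h

private lemma var_lower (X : Finset E) (hX : X.Nonempty) (u : E) (f : E → ℝ) (r : ℝ)
    (hr0 : 0 ≤ r) (hlow : ∀ x ∈ X, r / (X.card:ℝ) ≤ gibbs X u x) :
    r * unifVar X f ≤ gibbsVar X u f := by
  have hVeq := gibbsVar_eq X hX u f
  have h1 : ∑ x ∈ X, (r / (X.card:ℝ)) * (f x - gibbsExp X u f)^2
      ≤ ∑ x ∈ X, gibbs X u x * (f x - gibbsExp X u f)^2 :=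
    Finset.sum_le_sum fun x hx => mul_le_mul_of_nonneg_right (hlow x hx) (sq_nonneg _)
  have h2 : ∑ x ∈ X, (r / (X.card:ℝ)) * (f x - gibbsExp X u f)^2
      = r * ∑ x ∈ X, (X.card:ℝ)⁻¹ * (f x - gibbsExp X u f)^2 := by
    rw [Finset.mul_sum]
    exact Finset.sum_congr rfl fun x _ => by ring
  have h3 := unif_decomp X hX f (gibbsExp X u f)
  have h4 : unifVar X f ≤ ∑ x ∈ X, (X.card:ℝ)⁻¹ * (f x - gibbsExp X u f)^2 := by
    rw [h3]; nlinarith [sq_nonneg (unifExp X f - gibbsExp X u f)]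
  have h5 : r * unifVar X f ≤ r * ∑ x ∈ X, (X.card:ℝ)⁻¹ * (f x - gibbsExp X u f)^2 :=
    mul_le_mul_of_nonneg_left h4 hr0
  rw [hVeq]
  linarith

private lemma gibbs_lower (X : Finset E) (hX : X.Nonempty) (u : E) (M : ℝ)
    (hM : ∀ y ∈ X, |⟪u, y⟫_ℝ| ≤ M) (x : E) (hx : x ∈ X) :
    Real.exp (-(2*M)) / (X.card : ℝ) ≤ gibbs X u x := by
  have hZle : ∑ y ∈ X, Real.exp ⟪u, y⟫_ℝ ≤ (X.card : ℝ) * Real.exp M := by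
    calc ∑ y ∈ X, Real.exp ⟪u, y⟫_ℝ ≤ ∑ _y ∈ X, Real.exp M :=
          Finset.sum_le_sum fun y hy => Real.exp_le_exp.mpr ((abs_le.mp (hM y hy)).2)
      _ = (X.card : ℝ) * Real.exp M := by rw [Finset.sum_const, nsmul_eq_mul]
  have hNge : Real.exp (-M) ≤ Real.exp ⟪u, x⟫_ℝ :=
    Real.exp_le_exp.mpr (neg_le_of_abs_le (hM x hx))
  have hcard : (0:ℝ) < (X.card : ℝ) := by
    exact_mod_cast Finset.card_pos.mpr hX
  have h1 : Real.exp (-M) / ((X.card : ℝ) * Real.exp M) ≤ gibbs X u x := by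
    unfold gibbs
    exact div_le_div₀ (Real.exp_pos _).le hNge (Zpos X hX u) hZle
  calc Real.exp (-(2*M)) / (X.card : ℝ)
      = Real.exp (-M) / ((X.card : ℝ) * Real.exp M) := by
        rw [div_mul_eq_div_div_swap, ← Real.exp_sub]
        ring_nf
    _ ≤ gibbs X u x := h1

end Aux

set_option maxHeartbeats 1000000 in
/-- If `‖w‖₂ ≤ B` and `Var_{x∼U(X)}[(c+λw)·x] ≥ α‖c+λw‖₂²`, and
`0 < ρ ≤ min{1/(2BD), α/(12BD³)}`, then the regularized loss satisfies
`∇L_λ(w)·(c + λw) ≥ (βρα/2)·‖c + λw‖₂²`. -/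
theorem rloss_correlation_lower_bound {d : ℕ} (hd : 1 ≤ d)
    (X : Finset (EuclideanSpace ℝ (Fin d))) (hX : X.Nonempty)
    (D : ℝ) (hDpos : 0 < D) (hD : ∀ x ∈ X, ‖x‖ ≤ D)
    (β ρ : ℝ) (hβ : β ∈ Set.Ioo (0 : ℝ) 1) (hρ : ρ ∈ Set.Ioo (0 : ℝ) 1)
    (c : EuclideanSpace ℝ (Fin d)) (lam : ℝ) (hlam : 0 < lam)
    (w : EuclideanSpace ℝ (Fin d)) (B : ℝ) (hB : 0 < B) (hw : ‖w‖ ≤ B)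
    (α : ℝ) (hα : 0 < α)
    (hvar : unifVar X (fun x => ⟪c + lam • w, x⟫_ℝ) ≥ α * ‖c + lam • w‖ ^ 2)
    (hρsmall : ρ ≤ min (1 / (2 * B * D)) (α / (12 * B * D ^ 3))) :
    ⟪gradient (rloss X β ρ lam c) w, c + lam • w⟫_ℝ
      ≥ (β * ρ * α / 2) * ‖c + lam • w‖ ^ 2 := by
  by_cases hv0 : c + lam • w = 0
  · rw [hv0]
    simp
  set v : EuclideanSpace ℝ (Fin d) := c + lam • w with hv
  have hvne : v ≠ 0 := hv0
  have hρ0 : (0:ℝ) < ρ := hρ.1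
  have hρne : ρ ≠ 0 := ne_of_gt hρ0
  have hβ0 : (0:ℝ) < β := hβ.1
  have hβ1 : β < 1 := hβ.2
  -- derivative pieces
  have hd1 := hasDerivAt_gibbsExp_line X hX w v (fun x => (1-β) * ⟪c,x⟫_ℝ)
  have hd2 := hasDerivAt_gibbsExp_line X hX (ρ•w) (ρ•v) (fun x => β * ⟪c,x⟫_ℝ)
  have hd3 := hasDerivAt_negEnt_line X hX w v
  have hd4 := hasDerivAt_negEnt_line X hX (ρ•w) (ρ•v)
  have hG := (hd1.fun_add hd2).fun_add
    (((hd3.const_mul (1-β)).fun_add (hd4.const_mul (β/ρ))).const_mul lam)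
  have hDval := hG.congr_of_eventuallyEq (Filter.Eventually.of_forall (fun t : ℝ => by
    have hsm : ρ • (w + t • v) = (ρ•w) + t • (ρ•v) := by
      rw [smul_add, smul_comm]
    show rloss X β ρ lam c (w + t • v) = _
    simp only [rloss, pmix, reg, hsm]
    rw [← Finset.sum_add_distrib]
    congr 1
    exact Finset.sum_congr rfl fun x _ => by ring))
  have hcomp : HasDerivAt (fun t : ℝ => rloss X β ρ lam c (w + t • v))
      (fderiv ℝ (rloss X β ρ lam c) w v) 0 := by
    have hline : HasDerivAt (fun t : ℝ => w + t • v) v 0 := by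
      simpa using ((hasDerivAt_id (0:ℝ)).smul_const v).const_add w
    have L' : HasFDerivAt (rloss X β ρ lam c) (fderiv ℝ (rloss X β ρ lam c) w)
        (w + (0:ℝ) • v) := by
      simpa using ((diff_rloss X hX β ρ lam c) w).hasFDerivAt
    exact L'.comp_hasDerivAt 0 hline
  have hfd := hcomp.unique hDval
  have hgradeq : ⟪gradient (rloss X β ρ lam c) w, v⟫_ℝ = fderiv ℝ (rloss X β ρ lam c) w v := by
    unfold gradient
    exact InnerProductSpace.toDual_symm_apply
  -- key algebraic identity
  have hkey : ⟪gradient (rloss X β ρ lam c) w, v⟫_ℝ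
      = (1-β) * gibbsVar X w (fun x => ⟪v,x⟫_ℝ)
        + β * ρ * gibbsVar X (ρ•w) (fun x => ⟪v,x⟫_ℝ) := by
    rw [hgradeq, hfd]
    have hvx : ∀ x : EuclideanSpace ℝ (Fin d), ⟪v,x⟫_ℝ = ⟪c,x⟫_ℝ + lam * ⟪w,x⟫_ℝ := fun x => by
      rw [hv, inner_add_left, real_inner_smul_left]
    have hr1 : gibbsExp X w (fun x => ⟪v,x⟫_ℝ * ((1-β) * ⟪c,x⟫_ℝ))
        = (1-β) * gibbsExp X w (fun x => ⟪v,x⟫_ℝ * ⟪c,x⟫_ℝ) :=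
      gibbsExp_eq_smul X w _ _ _ fun x _ => by ring
    have hr2 : gibbsExp X w (fun x => (1-β) * ⟪c,x⟫_ℝ)
        = (1-β) * gibbsExp X w (fun x => ⟪c,x⟫_ℝ) :=
      gibbsExp_eq_smul X w _ _ _ fun x _ => rfl
    have hr3 : gibbsExp X (ρ•w) (fun x => ⟪ρ•v,x⟫_ℝ * (β * ⟪c,x⟫_ℝ))
        = (ρ*β) * gibbsExp X (ρ•w) (fun x => ⟪v,x⟫_ℝ * ⟪c,x⟫_ℝ) :=
      gibbsExp_eq_smul X (ρ•w) _ _ _ fun x _ => by rw [real_inner_smul_left]; ring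
    have hr4 : gibbsExp X (ρ•w) (fun y => ⟪ρ•v,y⟫_ℝ)
        = ρ * gibbsExp X (ρ•w) (fun y => ⟪v,y⟫_ℝ) :=
      gibbsExp_eq_smul X (ρ•w) _ _ _ fun x _ => real_inner_smul_left _ _ _
    have hr5 : gibbsExp X (ρ•w) (fun x => β * ⟪c,x⟫_ℝ)
        = β * gibbsExp X (ρ•w) (fun x => ⟪c,x⟫_ℝ) :=
      gibbsExp_eq_smul X (ρ•w) _ _ _ fun x _ => rfl
    have hr6 : gibbsExp X (ρ•w) (fun x => ⟪ρ•v,x⟫_ℝ * ⟪ρ•w,x⟫_ℝ)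
        = (ρ*ρ) * gibbsExp X (ρ•w) (fun x => ⟪v,x⟫_ℝ * ⟪w,x⟫_ℝ) :=
      gibbsExp_eq_smul X (ρ•w) _ _ _ fun x _ => by
        rw [real_inner_smul_left, real_inner_smul_left]; ring
    have hr7 : gibbsExp X (ρ•w) (fun y => ⟪ρ•w,y⟫_ℝ)
        = ρ * gibbsExp X (ρ•w) (fun y => ⟪w,y⟫_ℝ) :=
      gibbsExp_eq_smul X (ρ•w) _ _ _ fun x _ => real_inner_smul_left _ _ _
    have hs1 : gibbsExp X w (fun x => ⟪v,x⟫_ℝ ^ 2)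
        = gibbsExp X w (fun x => ⟪v,x⟫_ℝ * ⟪c,x⟫_ℝ)
          + lam * gibbsExp X w (fun x => ⟪v,x⟫_ℝ * ⟪w,x⟫_ℝ) :=
      gibbsExp_eq_add X w lam _ _ _ fun x _ => by rw [sq, hvx x]; ring
    have hs2 : gibbsExp X w (fun y => ⟪v,y⟫_ℝ)
        = gibbsExp X w (fun x => ⟪c,x⟫_ℝ) + lam * gibbsExp X w (fun x => ⟪w,x⟫_ℝ) :=
      gibbsExp_eq_add X w lam _ _ _ fun x _ => hvx x
    have hs3 : gibbsExp X (ρ•w) (fun x => ⟪v,x⟫_ℝ ^ 2)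
        = gibbsExp X (ρ•w) (fun x => ⟪v,x⟫_ℝ * ⟪c,x⟫_ℝ)
          + lam * gibbsExp X (ρ•w) (fun x => ⟪v,x⟫_ℝ * ⟪w,x⟫_ℝ) :=
      gibbsExp_eq_add X (ρ•w) lam _ _ _ fun x _ => by rw [sq, hvx x]; ring
    have hs4 : gibbsExp X (ρ•w) (fun y => ⟪v,y⟫_ℝ)
        = gibbsExp X (ρ•w) (fun x => ⟪c,x⟫_ℝ) + lam * gibbsExp X (ρ•w) (fun x => ⟪w,x⟫_ℝ) :=
      gibbsExp_eq_add X (ρ•w) lam _ _ _ fun x _ => hvx x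
    rw [show gibbsVar X w (fun x => ⟪v,x⟫_ℝ)
        = gibbsExp X w (fun x => ⟪v,x⟫_ℝ ^ 2) - gibbsExp X w (fun y => ⟪v,y⟫_ℝ) ^ 2 from rfl]
    rw [show gibbsVar X (ρ•w) (fun x => ⟪v,x⟫_ℝ)
        = gibbsExp X (ρ•w) (fun x => ⟪v,x⟫_ℝ ^ 2)
          - gibbsExp X (ρ•w) (fun y => ⟪v,y⟫_ℝ) ^ 2 from rfl]
    rw [hr1, hr2, hr3, hr4, hr5, hr6, hr7, hs1, hs2, hs3, hs4]
    field_simp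
    ring
  -- numeric bounds
  have hn : (0:ℝ) < (X.card : ℝ) := by exact_mod_cast Finset.card_pos.mpr hX
  have hUvar : α * ‖v‖ ^ 2 ≤ unifVar X (fun x => ⟪v,x⟫_ℝ) := hvar
  have hvarU_le : unifVar X (fun x => ⟪v,x⟫_ℝ) ≤ D^2 * ‖v‖^2 := by
    have h1 : ∀ x ∈ X, ⟪v,x⟫_ℝ^2 ≤ (‖v‖*D)^2 := by
      intro x hx
      have h2 : |⟪v,x⟫_ℝ| ≤ ‖v‖ * ‖x‖ := abs_real_inner_le_norm v x
      have h3 : ‖v‖ * ‖x‖ ≤ ‖v‖ * D := mul_le_mul_of_nonneg_left (hD x hx) (norm_nonneg v)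
      calc ⟪v,x⟫_ℝ^2 = |⟪v,x⟫_ℝ|^2 := (sq_abs _).symm
        _ ≤ (‖v‖*D)^2 := pow_le_pow_left₀ (abs_nonneg _) (h2.trans h3) 2
    have h4 : ∑ x ∈ X, ⟪v,x⟫_ℝ^2 ≤ (X.card : ℝ) * (‖v‖*D)^2 := by
      calc ∑ x ∈ X, ⟪v,x⟫_ℝ^2 ≤ ∑ _x ∈ X, (‖v‖*D)^2 := Finset.sum_le_sum h1
        _ = (X.card : ℝ) * (‖v‖*D)^2 := by rw [Finset.sum_const, nsmul_eq_mul]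
    have h5 : (X.card:ℝ)⁻¹ * ∑ x ∈ X, ⟪v,x⟫_ℝ^2 ≤ (‖v‖*D)^2 := by
      rw [inv_mul_le_iff₀ hn]
      linarith [h4]
    rw [show unifVar X (fun x => ⟪v,x⟫_ℝ)
        = (X.card:ℝ)⁻¹ * (∑ x ∈ X, ⟪v,x⟫_ℝ^2)
          - ((X.card:ℝ)⁻¹ * ∑ x ∈ X, ⟪v,x⟫_ℝ)^2 from rfl]
    nlinarith [sq_nonneg ((X.card:ℝ)⁻¹ * ∑ x ∈ X, ⟪v,x⟫_ℝ)]
  have hαD : α ≤ D^2 := by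
    have hnorm : 0 < ‖v‖^2 := pow_pos (norm_pos_iff.mpr hvne) 2
    nlinarith [hUvar, hvarU_le]
  have hM1 : ρ * (B*D) ≤ 1/12 := by
    have h1 : ρ ≤ α / (12*B*D^3) := le_trans hρsmall (min_le_right _ _)
    have h2 : ρ * (B*D) ≤ (α / (12*B*D^3)) * (B*D) :=
      mul_le_mul_of_nonneg_right h1 (by positivity)
    have h3 : (α / (12*B*D^3)) * (B*D) = α / (12*D^2) := by
      rw [div_mul_eq_mul_div, div_eq_div_iff (by positivity) (by positivity)]
      ring
    have h4 : α / (12*D^2) ≤ 1/12 := by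
      rw [div_le_div_iff₀ (by positivity) (by norm_num)]
      nlinarith [hαD]
    linarith
  have hr12 : (1:ℝ)/2 ≤ Real.exp (-(2*(ρ*(B*D)))) := by
    have := Real.add_one_le_exp (-(2*(ρ*(B*D))))
    linarith
  have hr0 : (0:ℝ) ≤ Real.exp (-(2*(ρ*(B*D)))) := (Real.exp_pos _).le
  have hlow : ∀ x ∈ X, Real.exp (-(2*(ρ*(B*D)))) / (X.card:ℝ) ≤ gibbs X (ρ•w) x := by
    intro x hx
    apply gibbs_lower X hX (ρ•w) (ρ*(B*D)) _ x hx
    intro y hy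
    rw [real_inner_smul_left, abs_mul, abs_of_pos hρ0]
    apply mul_le_mul_of_nonneg_left _ hρ0.le
    calc |⟪w,y⟫_ℝ| ≤ ‖w‖*‖y‖ := abs_real_inner_le_norm w y
      _ ≤ B*D := mul_le_mul hw (hD y hy) (norm_nonneg y) hB.le
  have hV2 := var_lower X hX (ρ•w) (fun x => ⟪v,x⟫_ℝ) (Real.exp (-(2*(ρ*(B*D))))) hr0 hlow
  have hU0 : 0 ≤ unifVar X (fun x => ⟪v,x⟫_ℝ) := le_trans (by positivity) hUvar
  have hV2' : (α/2) * ‖v‖^2 ≤ gibbsVar X (ρ•w) (fun x => ⟪v,x⟫_ℝ) := by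
    nlinarith [mul_nonneg (by linarith [hr12] :
      (0:ℝ) ≤ Real.exp (-(2*(ρ*(B*D)))) - 1/2) hU0]
  have hV1 := gibbsVar_nonneg X hX w (fun x => ⟪v,x⟫_ℝ)
  rw [ge_iff_le, hkey]
  have h6 : β*ρ*((α/2)*‖v‖^2) ≤ β*ρ*gibbsVar X (ρ•w) (fun x => ⟪v,x⟫_ℝ) :=
    mul_le_mul_of_nonneg_left hV2' (by positivity)
  have h7 : 0 ≤ (1-β) * gibbsVar X w (fun x => ⟪v,x⟫_ℝ) :=
    mul_nonneg (by linarith) hV1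
  nlinarith [h6, h7]

end
end
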